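/- An idempotent object in a symmetric monoidal category carries a commutative monoid structure: if ε : 𝟙 → C is such that the map ε ⊗ id_C : C → C ⊗ C is an isomorphism, then C admits a commutative monoid object structure whose unit is ε and whose multiplication is the inverse of ε ⊗ id_C (composed with appropriate unitors). -/

import Mathlib

open CategoryTheory MonoidalCategory

section Aux

variable {C : Type*} [Category C] [MonoidalCategory C] {X : C} (ε : 𝟙_ C ⟶ X)

private lemma idem_e1 :
    ((λ_ X).inv ≫ ε ▷ X) ▷ X ≫ (α_ X X X).hom =
      (λ_ (X ⊗ X)).inv ≫ ε ▷ (X ⊗ X) := by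
  rw [comp_whiskerRight, Category.assoc, associator_naturality_left]
  rw [leftUnitor_tensor_inv, Category.assoc]

private lemma idem_e2 :
    X ◁ ((ρ_ X).inv ≫ X ◁ ε) ≫ (α_ X X X).inv =
      (ρ_ (X ⊗ X)).inv ≫ (X ⊗ X) ◁ ε := by
  rw [MonoidalCategory.whiskerLeft_comp, Category.assoc]
  rw [show X ◁ (X ◁ ε) ≫ (α_ X X X).inv =
      (α_ X X (𝟙_ C)).inv ≫ (X ⊗ X) ◁ ε from by
    rw [← cancel_epi (α_ X X (𝟙_ C)).hom, ← associator_naturality_right_assoc]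
    simp]
  rw [← Category.assoc, ← rightUnitor_tensor_inv]

private lemma idem_key1 (h : IsIso ((λ_ X).inv ≫ ε ▷ X)) :
    X ◁ ((λ_ X).inv ≫ ε ▷ X) =
      ((λ_ X).inv ≫ ε ▷ X) ▷ X ≫ (α_ X X X).hom := by
  apply (cancel_epi ((λ_ X).inv ≫ ε ▷ X)).1
  calc ((λ_ X).inv ≫ ε ▷ X) ≫ X ◁ ((λ_ X).inv ≫ ε ▷ X)
      = (λ_ X).inv ≫ 𝟙_ C ◁ ((λ_ X).inv ≫ ε ▷ X) ≫ ε ▷ (X ⊗ X) := by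
        rw [Category.assoc, ← whisker_exchange]
    _ = ((λ_ X).inv ≫ ε ▷ X) ≫ (λ_ (X ⊗ X)).inv ≫ ε ▷ (X ⊗ X) := by
        rw [← reassoc_of% (leftUnitor_inv_naturality ((λ_ X).inv ≫ ε ▷ X))]
        simp
    _ = ((λ_ X).inv ≫ ε ▷ X) ≫ ((λ_ X).inv ≫ ε ▷ X) ▷ X ≫ (α_ X X X).hom := by
        rw [idem_e1]

private lemma idem_key2 (h : IsIso ((ρ_ X).inv ≫ X ◁ ε)) :
    X ◁ ((ρ_ X).inv ≫ X ◁ ε) =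
      ((ρ_ X).inv ≫ X ◁ ε) ▷ X ≫ (α_ X X X).hom := by
  apply (cancel_epi ((ρ_ X).inv ≫ X ◁ ε)).1
  have e2' : X ◁ ((ρ_ X).inv ≫ X ◁ ε) =
      (ρ_ (X ⊗ X)).inv ≫ (X ⊗ X) ◁ ε ≫ (α_ X X X).hom := by
    rw [← cancel_mono (α_ X X X).inv]
    simpa using idem_e2 ε
  rw [e2']
  calc ((ρ_ X).inv ≫ X ◁ ε) ≫ (ρ_ (X ⊗ X)).inv ≫ (X ⊗ X) ◁ ε ≫ (α_ X X X).hom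
      = (ρ_ X).inv ≫ ((ρ_ X).inv ≫ X ◁ ε) ▷ 𝟙_ C ≫ (X ⊗ X) ◁ ε ≫ (α_ X X X).hom := by
        rw [← reassoc_of% (rightUnitor_inv_naturality ((ρ_ X).inv ≫ X ◁ ε))]
        simp
    _ = (ρ_ X).inv ≫ X ◁ ε ≫ ((ρ_ X).inv ≫ X ◁ ε) ▷ X ≫ (α_ X X X).hom := by
        rw [whisker_exchange_assoc]
    _ = ((ρ_ X).inv ≫ X ◁ ε) ≫ ((ρ_ X).inv ≫ X ◁ ε) ▷ X ≫ (α_ X X X).hom := by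
        simp

end Aux

section AuxSymm

variable {C : Type*} [Category C] [MonoidalCategory C] [SymmetricCategory C]
  {X : C} (ε : 𝟙_ C ⟶ X)

private lemma idem_b_eq :
    (ρ_ X).inv ≫ X ◁ ε = ((λ_ X).inv ≫ ε ▷ X) ≫ (β_ X X).hom := by
  rw [Category.assoc, BraidedCategory.braiding_naturality_left ε X,
    leftUnitor_inv_braiding_assoc]

private lemma idem_braiding_eq_id (h : IsIso ((λ_ X).inv ≫ ε ▷ X)) :
    (β_ X X).hom = 𝟙 (X ⊗ X) := by
  have hb : IsIso ((ρ_ X).inv ≫ X ◁ ε) := by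
    rw [idem_b_eq]; exact inferInstance
  have hba : ((ρ_ X).inv ≫ X ◁ ε) ≫ (β_ X X).hom = (λ_ X).inv ≫ ε ▷ X := by
    rw [idem_b_eq, Category.assoc, SymmetricCategory.symmetry, Category.comp_id]
  have hex : (α_ X X X).hom ≫ (β_ X (X ⊗ X)).hom =
      (β_ X X).hom ▷ X ≫ (α_ X X X).hom ≫ X ◁ (β_ X X).hom ≫ (α_ X X X).inv := by
    rw [← cancel_mono (α_ X X X).hom]
    simpa using BraidedCategory.hexagon_forward X X X
  apply (cancel_mono (((λ_ X).inv ≫ ε ▷ X) ▷ X)).1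
  rw [Category.id_comp, ← BraidedCategory.braiding_naturality_right,
    idem_key1 ε h, Category.assoc, hex]
  rw [← comp_whiskerRight_assoc, ← idem_b_eq]
  rw [← reassoc_of% (idem_key2 ε hb)]
  rw [← MonoidalCategory.whiskerLeft_comp_assoc, hba]
  rw [reassoc_of% (idem_key1 ε h)]
  simp

private lemma idem_b_eq_a (h : IsIso ((λ_ X).inv ≫ ε ▷ X)) :
    (ρ_ X).inv ≫ X ◁ ε = (λ_ X).inv ≫ ε ▷ X := by
  rw [idem_b_eq, idem_braiding_eq_id ε h, Category.comp_id]

end AuxSymm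

/-- An idempotent object in a symmetric monoidal category carries a commutative monoid
structure whose unit is `ε` and whose multiplication is the inverse of the isomorphism
`X ≅ 𝟙 ⊗ X ⟶ X ⊗ X` induced by `ε`. -/
theorem idempotent_commMon {C : Type*} [Category C] [MonoidalCategory C]
    [SymmetricCategory C] {X : C} (ε : 𝟙_ C ⟶ X)
    (h : IsIso ((λ_ X).inv ≫ ε ▷ X)) :
    ∃ M : CommMon C, M.X = X ∧ HEq M.mon.one ε ∧
      HEq M.mon.mul (@inv _ _ _ _ ((λ_ X).inv ≫ ε ▷ X) h) := by
  haveI := h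
  refine ⟨letI inst : MonObj X := ⟨ε, inv ((λ_ X).inv ≫ ε ▷ X), ?_, ?_, ?_⟩
    { X := X, mon := inst, comm := ⟨?_⟩ },
    rfl, HEq.rfl, HEq.rfl⟩
  · rw [IsIso.comp_inv_eq]
    simp
  · rw [IsIso.comp_inv_eq, ← idem_b_eq_a ε h]
    simp
  · rw [← cancel_epi (((λ_ X).inv ≫ ε ▷ X) ▷ X)]
    have l : ((λ_ X).inv ≫ ε ▷ X) ▷ X ≫ inv ((λ_ X).inv ≫ ε ▷ X) ▷ X ≫
        inv ((λ_ X).inv ≫ ε ▷ X) = inv ((λ_ X).inv ≫ ε ▷ X) := by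
      rw [← comp_whiskerRight_assoc, IsIso.hom_inv_id]
      simp
    have r : ((λ_ X).inv ≫ ε ▷ X) ▷ X ≫ (α_ X X X).hom ≫
        X ◁ inv ((λ_ X).inv ≫ ε ▷ X) ≫ inv ((λ_ X).inv ≫ ε ▷ X) =
        inv ((λ_ X).inv ≫ ε ▷ X) := by
      rw [← Category.assoc, ← idem_key1 ε h,
        ← MonoidalCategory.whiskerLeft_comp_assoc, IsIso.hom_inv_id]
      simp
    rw [l, r]
  · rw [idem_braiding_eq_id ε h]; simp
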